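/- Let n and k be integers with 1 ≤ k ≤ n−2, and let λ and μ be partitions in the (k+1)×(n−k) box satisfying |λ| ≤ |μ| − k(n−k) + (k+1). If h is an integer with 1 ≤ h ≤ k and λ_{h+1} > μ_{h+1}, then λ_{h+1} = μ_{h+1} + 1, λ_{h+1} = 1, μ_{h+1} = 0, |μ| = k(n−k) − (k−h), and |λ| = h+1. -/

import Mathlib

/-- A partition in the `(k+1) × (n-k)` box: a weakly decreasing sequence
`λ_1 ≥ … ≥ λ_{k+1}` (indexed by `Fin (k+1)`) with all parts at most `n - k`. -/
def IsBoxPartition (n k : ℕ) (lam : Fin (k + 1) → ℕ) : Prop :=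
  (∀ i, lam i ≤ n - k) ∧ Antitone lam

lemma box_sum_bounds (k : ℕ) (f : Fin (k + 1) → ℕ) (hf : Antitone f) (m : ℕ)
    (hfm : ∀ i, f i ≤ m) (h : ℕ) (hh : h ≤ k) :
    (h + 1) * f ⟨h, by omega⟩ ≤ (∑ i, f i) ∧
      (∑ i, f i) ≤ h * m + (k + 1 - h) * f ⟨h, by omega⟩ := by
  set H : Fin (k + 1) := ⟨h, by omega⟩ with hH
  set F : ℕ → ℕ := fun i => if hi : i < k + 1 then f ⟨i, hi⟩ else 0 with hF
  have hsum : (∑ i, f i) = ∑ i ∈ Finset.range (k + 1), F i := by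
    rw [← Fin.sum_univ_eq_sum_range F (k + 1)]
    refine Finset.sum_congr rfl fun i _ => ?_
    simp [hF, i.isLt]
    exact fun hki => absurd i.isLt (by omega)
  constructor
  · rw [hsum]
    have h1 : ∑ _i ∈ Finset.range (h + 1), f H ≤ ∑ i ∈ Finset.range (h + 1), F i := by
      refine Finset.sum_le_sum fun i hi => ?_
      simp only [Finset.mem_range] at hi
      have hik : i < k + 1 := by omega
      simp only [hF, dif_pos hik]
      exact hf (show (⟨i, hik⟩ : Fin (k + 1)) ≤ H by
        rw [Fin.le_def]; simp [hH]; omega)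
    have h2 : ∑ i ∈ Finset.range (h + 1), F i ≤ ∑ i ∈ Finset.range (k + 1), F i :=
      Finset.sum_le_sum_of_subset (Finset.range_subset_range.mpr (by omega))
    calc (h + 1) * f H = ∑ _i ∈ Finset.range (h + 1), f H := by
          rw [Finset.sum_const, Finset.card_range, smul_eq_mul]
      _ ≤ ∑ i ∈ Finset.range (h + 1), F i := h1
      _ ≤ ∑ i ∈ Finset.range (k + 1), F i := h2
  · rw [hsum, Finset.range_eq_Ico,
      ← Finset.sum_Ico_consecutive F (Nat.zero_le h) (by omega : h ≤ k + 1)]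
    have b1 : ∑ i ∈ Finset.Ico 0 h, F i ≤ h * m := by
      have := Finset.sum_le_card_nsmul (Finset.Ico 0 h) F m fun i _ => by
        simp only [hF]; split
        · exact hfm _
        · exact Nat.zero_le _
      simpa [Nat.card_Ico, smul_eq_mul] using this
    have b2 : ∑ i ∈ Finset.Ico h (k + 1), F i ≤ (k + 1 - h) * f H := by
      have := Finset.sum_le_card_nsmul (Finset.Ico h (k + 1)) F (f H) fun i hi => by
        simp only [Finset.mem_Ico] at hi
        simp only [hF, dif_pos hi.2]
        exact hf (show H ≤ (⟨i, hi.2⟩ : Fin (k + 1)) by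
          rw [Fin.le_def]; simp [hH]; omega)
      simpa [Nat.card_Ico, smul_eq_mul] using this
    omega

/-- Equalities (10) in the paper: if `|λ| ≤ |μ| - k(n-k) + (k+1)` and
`λ_{h+1} > μ_{h+1}` with `1 ≤ h ≤ k`, then `λ_{h+1} = μ_{h+1} + 1 = 1`,
`μ_{h+1} = 0`, `|μ| = k(n-k) - (k-h)` and `|λ| = h + 1`. -/
theorem box_partition_later_part_gt_aux (n k : ℕ) (hk : 1 ≤ k) (hkn : k + 2 ≤ n)
    (lam mu : Fin (k + 1) → ℕ)
    (hlam : IsBoxPartition n k lam) (hmu : IsBoxPartition n k mu)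
    (hcodim : (∑ i, lam i) + k * (n - k) ≤ (∑ i, mu i) + (k + 1))
    (h : ℕ) (hh1 : 1 ≤ h) (hhk : h ≤ k)
    (hgt : mu ⟨h, by omega⟩ < lam ⟨h, by omega⟩) :
    lam ⟨h, by omega⟩ = mu ⟨h, by omega⟩ + 1 ∧
      lam ⟨h, by omega⟩ = 1 ∧
      mu ⟨h, by omega⟩ = 0 ∧
      (∑ i, mu i) = k * (n - k) - (k - h) ∧
      (∑ i, lam i) = h + 1 := by
  set m : ℕ := n - k with hm_def
  have hm2 : 2 ≤ m := by omega
  set H : Fin (k + 1) := ⟨h, by omega⟩ with hH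
  have e1 : (h + 1) * lam H ≤ (∑ i, lam i) :=
    (box_sum_bounds k lam hlam.2 m hlam.1 h hhk).1
  have e2 : (∑ i, mu i) ≤ h * m + (k + 1 - h) * mu H :=
    (box_sum_bounds k mu hmu.2 m hmu.1 h hhk).2
  have e4 : mu H + 1 ≤ lam H := hgt
  have e5 : lam H ≤ m := hlam.1 H
  -- key combined inequality
  have key : (h + 1) * (mu H + 1) + k * m ≤ h * m + (k + 1 - h) * mu H + (k + 1) := by
    calc (h + 1) * (mu H + 1) + k * m ≤ (h + 1) * lam H + k * m := by
          have := Nat.mul_le_mul_left (h + 1) e4; omega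
      _ ≤ (∑ i, lam i) + k * m := by omega
      _ ≤ (∑ i, mu i) + (k + 1) := hcodim
      _ ≤ h * m + (k + 1 - h) * mu H + (k + 1) := by omega
  have hmu0 : mu H = 0 := by
    by_contra hA
    have hA1 : 1 ≤ mu H := Nat.one_le_iff_ne_zero.mpr hA
    have hAm : mu H + 1 ≤ m := le_trans e4 e5
    zify [show h ≤ k + 1 by omega] at key
    have hkh : (0 : ℤ) ≤ (k : ℤ) - h := by
      have := hhk; omega
    have hp1 : (0 : ℤ) ≤ ((k : ℤ) - h) * ((m : ℤ) - 1 - mu H) := by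
      apply mul_nonneg hkh
      have := hAm; omega
    have hp2 : (h : ℤ) * 1 ≤ (h : ℤ) * mu H := by
      apply mul_le_mul_of_nonneg_left _ (by positivity)
      exact_mod_cast hA1
    nlinarith [key, hp1, hp2]
  have hhk_eq : h = k := by
    by_contra hne
    have hlt : h + 1 ≤ k := by omega
    rw [hmu0] at key
    zify [show h ≤ k + 1 by omega] at key
    have hp : (2 : ℤ) * ((k : ℤ) - h) ≤ (m : ℤ) * ((k : ℤ) - h) := by
      apply mul_le_mul_of_nonneg_right (by exact_mod_cast hm2)
      omega
    nlinarith [key, hp]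
  have e2' : (∑ i, mu i) ≤ k * m := by
    have h1 : (k + 1 - h) * mu H = 0 := by rw [hmu0, Nat.mul_zero]
    have h2 : h * m = k * m := by rw [hhk_eq]
    omega
  have hSl : (∑ i, lam i) ≤ k + 1 := by omega
  have hlamH : lam H = 1 := by
    have hle : (h + 1) * lam H ≤ (h + 1) * 1 := by
      have := le_trans e1 hSl
      omega
    have := Nat.le_of_mul_le_mul_left hle (by omega)
    omega
  rw [hlamH, Nat.mul_one] at e1
  have hSl_eq : (∑ i, lam i) = h + 1 := by omega
  have hSm_eq : (∑ i, mu i) = k * m - (k - h) := by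
    have h0 : k - h = 0 := by omega
    omega
  have hA : lam H = mu H + 1 := by omega
  exact ⟨hA, hlamH, hmu0, hSm_eq, hSl_eq⟩
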